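/- (Strict Finsler's lemma.) Let E be a finite-dimensional real inner product space and let A, B be self-adjoint linear endomorphisms of E. Assume B is indefinite, i.e., there exist u, v ∈ E with ⟨B u, u⟩ > 0 and ⟨B v, v⟩ < 0. Then ⟨A x, x⟩ > 0 for every x ≠ 0 with ⟨B x, x⟩ = 0 if and only if there exists τ ∈ ℝ such that A + τ·B is positive definite. -/

import Mathlib

open scoped RealInnerProductSpace

lemma eig_of_min' {E : Type*} [NormedAddCommGroup E] [InnerProductSpace ℝ E]
    (C : E →ₗ[ℝ] E) (hC : C.IsSymmetric) (lam : ℝ)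
    (hmin : ∀ z : E, lam * ⟪z, z⟫ ≤ ⟪C z, z⟫) (x : E) (hx : ⟪C x, x⟫ = lam * ⟪x, x⟫) :
    C x = lam • x := by
  set T : E →ₗ[ℝ] E := C - lam • LinearMap.id with hT
  have hTapp : ∀ z, T z = C z - lam • z := by intro z; simp [hT]
  have hTsym : ∀ a b : E, ⟪T a, b⟫ = ⟪a, T b⟫ := by
    intro a b
    rw [hTapp, hTapp, inner_sub_left, inner_sub_right, real_inner_smul_left,
      real_inner_smul_right, hC a b]
  have hTnn : ∀ z, 0 ≤ ⟪T z, z⟫ := by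
    intro z; rw [hTapp, inner_sub_left, real_inner_smul_left]; linarith [hmin z]
  have hTx : ⟪T x, x⟫ = 0 := by rw [hTapp, inner_sub_left, real_inner_smul_left]; linarith
  have key : T x = 0 := by
    by_contra hne
    set a : ℝ := ⟪T x, T x⟫ with ha
    have ha0 : 0 < a := lt_of_le_of_ne real_inner_self_nonneg (Ne.symm (inner_self_ne_zero.2 hne))
    set b : ℝ := ⟪T (T x), T x⟫ with hb
    set t : ℝ := -(a / (|b| + 1)) with ht
    have hq : 0 ≤ ⟪T (x + t • T x), x + t • T x⟫ := hTnn _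
    have h2 : ⟪T (T x), x⟫ = a := by rw [hTsym (T x) x, real_inner_comm]
    have hexp : ⟪T (x + t • T x), x + t • T x⟫ = 2 * t * a + t ^ 2 * b := by
      rw [map_add, map_smul, inner_add_left, inner_add_right, inner_add_right,
        real_inner_smul_left, real_inner_smul_left, real_inner_smul_right,
        real_inner_smul_right, hTx, h2, ← ha, ← hb]
      ring
    rw [hexp] at hq
    have hb1 : 0 < |b| + 1 := by positivity
    have hval : (2 * t * a + t ^ 2 * b) * (|b| + 1) ^ 2 = a ^ 2 * (b - 2 * (|b| + 1)) := by
      rw [ht]; field_simp; ring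
    have hnn : 0 ≤ (2 * t * a + t ^ 2 * b) * (|b| + 1) ^ 2 := mul_nonneg hq (by positivity)
    have hneg : a ^ 2 * (b - 2 * (|b| + 1)) < 0 :=
      mul_neg_of_pos_of_neg (by positivity) (by nlinarith [le_abs_self b, abs_nonneg b])
    linarith
  have h0 : C x - lam • x = 0 := by rw [← hTapp]; exact key
  linear_combination (norm := module) h0

set_option maxHeartbeats 2000000 in
/-- **Strict Finsler's lemma.**
Let `A`, `B` be self-adjoint endomorphisms of a finite-dimensional real inner product
space `E`, with `B` indefinite.  Then `⟪A x, x⟫ > 0` for every `x ≠ 0` with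
`⟪B x, x⟫ = 0` if and only if `A + τ • B` is positive definite for some `τ ∈ ℝ`. -/
theorem finsler_lemma_strict
    {E : Type*} [NormedAddCommGroup E] [InnerProductSpace ℝ E] [FiniteDimensional ℝ E]
    (A B : E →ₗ[ℝ] E) (hA : A.IsSymmetric) (hB : B.IsSymmetric)
    (hBpos : ∃ u : E, 0 < ⟪B u, u⟫) (hBneg : ∃ v : E, ⟪B v, v⟫ < 0) :
    (∀ x : E, x ≠ 0 → ⟪B x, x⟫ = 0 → 0 < ⟪A x, x⟫) ↔
      ∃ τ : ℝ, ∀ x : E, x ≠ 0 → 0 < ⟪(A + τ • B) x, x⟫ := by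
  constructor
  · intro hyp
    obtain ⟨u, hu⟩ := hBpos
    obtain ⟨v, hv⟩ := hBneg
    have hu0 : u ≠ 0 := by rintro rfl; simp at hu
    have hv0 : v ≠ 0 := by rintro rfl; simp at hv
    have hnt : Nontrivial E := ⟨⟨u, 0, hu0⟩⟩
    have hsm : ∀ (L : E →ₗ[ℝ] E) (c : ℝ) (x : E), ⟪L (c • x), c • x⟫ = c ^ 2 * ⟪L x, x⟫ := by
      intro L c x
      rw [map_smul, real_inner_smul_left, real_inner_smul_right]; ring
    set S : Set E := Metric.sphere (0 : E) 1 with hSdef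
    have hScpt : IsCompact S := isCompact_sphere 0 1
    have hSne : S.Nonempty := NormedSpace.sphere_nonempty.2 zero_le_one
    have hmemS : ∀ x : E, x ∈ S ↔ ‖x‖ = 1 := fun x => mem_sphere_zero_iff_norm
    have hSnz : ∀ x ∈ S, x ≠ 0 := by
      intro x hx; rw [hmemS] at hx; intro h; rw [h, norm_zero] at hx; norm_num at hx
    have hAc : Continuous fun x : E => ⟪A x, x⟫ :=
      A.continuous_of_finiteDimensional.inner continuous_id
    have hBc : Continuous fun x : E => ⟪B x, x⟫ :=
      B.continuous_of_finiteDimensional.inner continuous_id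
    set q : ℝ → E → ℝ := fun τ x => ⟪A x, x⟫ + τ * ⟪B x, x⟫ with hqdef
    have hqc : ∀ τ, Continuous (q τ) := fun τ => hAc.add (continuous_const.mul hBc)
    choose xm hxmS hxm using fun τ : ℝ => hScpt.exists_isMinOn hSne (hqc τ).continuousOn
    set m : ℝ → ℝ := fun τ => q τ (xm τ) with hmdef
    have hmle : ∀ τ, ∀ x ∈ S, m τ ≤ q τ x := fun τ x hx => isMinOn_iff.1 (hxm τ) x hx
    obtain ⟨G0, hG0⟩ := hScpt.exists_bound_of_continuousOn hBc.continuousOn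
    set G := max G0 0 with hGdef
    have hG : ∀ x ∈ S, |⟪B x, x⟫| ≤ G := fun x hx => le_trans (hG0 x hx) (le_max_left _ _)
    have hGnn : 0 ≤ G := le_max_right _ _
    -- scaling bound
    have hSq : ∀ (τ : ℝ) (x : E), x ≠ 0 → m τ * ‖x‖ ^ 2 ≤ q τ x := by
      intro τ x hx
      have hc : (0:ℝ) < ‖x‖ := norm_pos_iff.2 hx
      have hy : (‖x‖⁻¹ • x) ∈ S := by
        rw [hmemS, norm_smul, norm_inv, norm_norm, inv_mul_cancel₀ (ne_of_gt hc)]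
      have h1 : m τ ≤ q τ (‖x‖⁻¹ • x) := hmle τ _ hy
      have h2 : q τ (‖x‖⁻¹ • x) = ‖x‖⁻¹ ^ 2 * q τ x := by
        simp only [hqdef]; rw [hsm, hsm]; ring
      rw [h2] at h1
      have h3 := mul_le_mul_of_nonneg_left h1 (le_of_lt (mul_pos hc hc))
      calc m τ * ‖x‖ ^ 2 = ‖x‖ * ‖x‖ * m τ := by ring
        _ ≤ ‖x‖ * ‖x‖ * (‖x‖⁻¹ ^ 2 * q τ x) := h3
        _ = q τ x := by field_simp
    -- normalized indefiniteness witnesses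
    set u1 := ‖u‖⁻¹ • u with hu1def
    set v1 := ‖v‖⁻¹ • v with hv1def
    have hu1S : u1 ∈ S := by
      rw [hmemS, hu1def, norm_smul, norm_inv, norm_norm,
        inv_mul_cancel₀ (norm_ne_zero_iff.2 hu0)]
    have hv1S : v1 ∈ S := by
      rw [hmemS, hv1def, norm_smul, norm_inv, norm_norm,
        inv_mul_cancel₀ (norm_ne_zero_iff.2 hv0)]
    have hcu : 0 < ⟪B u1, u1⟫ := by
      rw [hu1def, hsm]
      have h0u : (0:ℝ) < ‖u‖ := norm_pos_iff.2 hu0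
      exact mul_pos (pow_pos (inv_pos.2 h0u) 2) hu
    have hcv : ⟪B v1, v1⟫ < 0 := by
      rw [hv1def, hsm]
      have h0v : (0:ℝ) < ‖v‖ := norm_pos_iff.2 hv0
      exact mul_neg_of_pos_of_neg (pow_pos (inv_pos.2 h0v) 2) hv
    -- m is continuous (Lipschitz)
    have key : ∀ τ₁ τ₂ : ℝ, m τ₁ - m τ₂ ≤ G * |τ₁ - τ₂| := by
      intro τ₁ τ₂
      have h1 : m τ₁ ≤ q τ₁ (xm τ₂) := hmle τ₁ _ (hxmS τ₂)
      have h2 : q τ₁ (xm τ₂) = m τ₂ + (τ₁ - τ₂) * ⟪B (xm τ₂), xm τ₂⟫ := by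
        simp only [hmdef, hqdef]; ring
      have h3 : (τ₁ - τ₂) * ⟪B (xm τ₂), xm τ₂⟫ ≤ G * |τ₁ - τ₂| := by
        calc (τ₁ - τ₂) * ⟪B (xm τ₂), xm τ₂⟫ ≤ |(τ₁ - τ₂) * ⟪B (xm τ₂), xm τ₂⟫| := le_abs_self _
          _ = |τ₁ - τ₂| * |⟪B (xm τ₂), xm τ₂⟫| := by rw [abs_mul]
          _ ≤ |τ₁ - τ₂| * G := mul_le_mul_of_nonneg_left (hG _ (hxmS τ₂)) (abs_nonneg _)
          _ = G * |τ₁ - τ₂| := by ring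
      linarith
    have hmcont : Continuous m := by
      have hlip : LipschitzWith ⟨G, hGnn⟩ m := by
        apply LipschitzWith.of_dist_le_mul
        intro τ₁ τ₂
        rw [Real.dist_eq, Real.dist_eq]
        show |m τ₁ - m τ₂| ≤ G * |τ₁ - τ₂|
        rw [abs_sub_le_iff]
        exact ⟨key τ₁ τ₂, by rw [abs_sub_comm]; exact key τ₂ τ₁⟩
      exact hlip.continuous
    -- global maximizer of m
    set a : ℝ := min ((m 0 - ⟪A u1, u1⟫) / ⟪B u1, u1⟫) 0 with hadef
    set b : ℝ := max ((m 0 - ⟪A v1, v1⟫) / ⟪B v1, v1⟫) 0 with hbdef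
    have ha0 : a ≤ 0 := min_le_right _ _
    have hb0 : 0 ≤ b := le_max_right _ _
    have h0I : (0:ℝ) ∈ Set.Icc a b := ⟨ha0, hb0⟩
    obtain ⟨τ₀, hτ₀I, hτ₀max⟩ :=
      (isCompact_Icc (a := a) (b := b)).exists_isMaxOn ⟨0, h0I⟩ hmcont.continuousOn
    have hmax : ∀ τ, m τ ≤ m τ₀ := by
      intro τ
      by_cases hτ : τ ∈ Set.Icc a b
      · exact isMaxOn_iff.1 hτ₀max τ hτ
      · have h0le : m 0 ≤ m τ₀ := isMaxOn_iff.1 hτ₀max 0 h0I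
        rw [Set.mem_Icc, not_and_or, not_le, not_le] at hτ
        rcases hτ with hτ | hτ
        · -- τ < a : use u1
          have h1 : m τ ≤ ⟪A u1, u1⟫ + τ * ⟪B u1, u1⟫ := hmle τ u1 hu1S
          have h2 : τ ≤ (m 0 - ⟪A u1, u1⟫) / ⟪B u1, u1⟫ :=
            le_trans (le_of_lt hτ) (min_le_left _ _)
          have h3 : τ * ⟪B u1, u1⟫ ≤ m 0 - ⟪A u1, u1⟫ := (le_div_iff₀ hcu).1 h2
          linarith
        · -- b < τ : use v1
          have h1 : m τ ≤ ⟪A v1, v1⟫ + τ * ⟪B v1, v1⟫ := hmle τ v1 hv1S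
          have h2 : (m 0 - ⟪A v1, v1⟫) / ⟪B v1, v1⟫ ≤ τ :=
            le_trans (le_max_left _ _) (le_of_lt hτ)
          have h3 : τ * ⟪B v1, v1⟫ ≤ m 0 - ⟪A v1, v1⟫ := (div_le_iff_of_neg hcv).1 h2
          linarith
    set lam := m τ₀ with hlamdef
    clear_value lam
    have hCapp : ∀ x : E, ⟪(A + τ₀ • B) x, x⟫ = q τ₀ x := by
      intro x
      simp only [LinearMap.add_apply, LinearMap.smul_apply, inner_add_left,
        real_inner_smul_left, hqdef]
    by_cases hlam : 0 < lam
    · refine ⟨τ₀, fun x hx => ?_⟩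
      have h1 := hSq τ₀ x hx
      have h2 : (0:ℝ) < lam * ‖x‖ ^ 2 := by
        have hnx : (0:ℝ) < ‖x‖ := norm_pos_iff.2 hx
        exact mul_pos hlam (pow_pos hnx 2)
      rw [hlamdef] at h2
      rw [hCapp]
      linarith
    exfalso
    push_neg at hlam
    have hCsym : (A + τ₀ • B).IsSymmetric := by
      intro x y
      simp only [LinearMap.add_apply, LinearMap.smul_apply, inner_add_left, inner_add_right,
        real_inner_smul_left, real_inner_smul_right, hA x y, hB x y]
    have heig : ∀ x ∈ S, q τ₀ x = lam → (A + τ₀ • B) x = lam • x := by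
      intro x hx hqx
      apply eig_of_min' _ hCsym
      · intro z
        rcases eq_or_ne z 0 with rfl | hz
        · simp
        · rw [hCapp, real_inner_self_eq_norm_sq, hlamdef]; exact hSq τ₀ z hz
      · rw [hCapp, hqx, real_inner_self_eq_norm_sq, (hmemS x).1 hx]; norm_num
    have hz0 : ∀ x ∈ S, q τ₀ x = lam → ⟪B x, x⟫ ≠ 0 := by
      intro x hx hqx hgx
      have hfx : ⟪A x, x⟫ = lam := by
        have : q τ₀ x = ⟪A x, x⟫ + τ₀ * ⟪B x, x⟫ := rfl
        rw [hgx] at this; rw [← hqx, this]; ring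
      have := hyp x (hSnz x hx) hgx
      rw [hfx] at this
      linarith
    have hmix : ∀ x₁ ∈ S, ∀ x₂ ∈ S, q τ₀ x₁ = lam → q τ₀ x₂ = lam →
        0 < ⟪B x₁, x₁⟫ → ⟪B x₂, x₂⟫ < 0 → False := by
      intro x₁ hx₁ x₂ hx₂ hq1 hq2 hg1 hg2
      have he1 := heig x₁ hx₁ hq1
      have he2 := heig x₂ hx₂ hq2
      set φ : ℝ → ℝ := fun t => ⟪B (x₂ + t • (x₁ - x₂)), x₂ + t • (x₁ - x₂)⟫ with hφdef
      have hφc : ContinuousOn φ (Set.Icc (0:ℝ) 1) := by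
        apply Continuous.continuousOn
        have hc1 : Continuous fun t : ℝ => x₂ + t • (x₁ - x₂) :=
          continuous_const.add (continuous_id.smul continuous_const)
        exact hBc.comp hc1
      have hφ0 : φ 0 = ⟪B x₂, x₂⟫ := by simp [hφdef]
      have hφ1 : φ 1 = ⟪B x₁, x₁⟫ := by simp [hφdef]
      have h0m : (0:ℝ) ∈ Set.Icc (φ 0) (φ 1) := by
        rw [hφ0, hφ1]; exact ⟨le_of_lt hg2, le_of_lt hg1⟩
      obtain ⟨t, htI, htz⟩ := intermediate_value_Icc zero_le_one hφc h0m
      set z := x₂ + t • (x₁ - x₂) with hzdef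
      have hgz : ⟪B z, z⟫ = 0 := htz
      have hzne : z ≠ 0 := by
        intro h
        have hx2eq : (1 - t) • x₂ = (-t) • x₁ := by
          have h' : x₂ + t • (x₁ - x₂) = 0 := h
          linear_combination (norm := module) h'
        have heq := congrArg (fun w : E => ⟪B w, w⟫) hx2eq
        rw [hsm, hsm] at heq
        have ht2 : t ^ 2 * ⟪B x₁, x₁⟫ ≤ 0 := by nlinarith [sq_nonneg (1 - t)]
        have ht0 : t = 0 := by
          by_contra hne'
          have hpt : 0 < t ^ 2 := by positivity
          nlinarith
        rw [ht0] at heq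
        simp at heq
        linarith
      have hCz : (A + τ₀ • B) z = lam • z := by
        rw [hzdef, map_add, map_smul, map_sub, he1, he2]
        module
      have hfz : ⟪A z, z⟫ = lam * ‖z‖ ^ 2 := by
        have h1 : ⟪(A + τ₀ • B) z, z⟫ = lam * ‖z‖ ^ 2 := by
          rw [hCz, real_inner_smul_left, real_inner_self_eq_norm_sq]
        rw [hCapp] at h1
        have h2 : q τ₀ z = ⟪A z, z⟫ + τ₀ * ⟪B z, z⟫ := rfl
        rw [hgz, mul_zero, add_zero] at h2
        rw [← h2]
        exact h1
      have hpos := hyp z hzne hgz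
      have hn : (0:ℝ) ≤ ‖z‖ ^ 2 := sq_nonneg _
      nlinarith
    -- sign of g on the minimizer set
    obtain ⟨σ, hσ1, hσmin, w₀, hw₀S, hw₀⟩ :
        ∃ σ : ℝ, (σ = 1 ∨ σ = -1) ∧ (∀ x ∈ S, q τ₀ x = lam → 0 < σ * ⟪B x, x⟫) ∧
          ∃ w ∈ S, σ * ⟪B w, w⟫ < 0 := by
      by_cases hp : ∀ x ∈ S, q τ₀ x = lam → 0 < ⟪B x, x⟫
      · exact ⟨1, Or.inl rfl, fun x hx hq => by rw [one_mul]; exact hp x hx hq, v1, hv1S, by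
          rw [one_mul]; exact hcv⟩
      · push_neg at hp
        obtain ⟨x₂, hx₂S, hx₂q, hx₂g⟩ := hp
        have hg2 : ⟪B x₂, x₂⟫ < 0 :=
          lt_of_le_of_ne hx₂g (hz0 x₂ hx₂S hx₂q)
        refine ⟨-1, Or.inr rfl, ?_, u1, hu1S, by rw [neg_one_mul]; linarith⟩
        intro x hxS hxq
        rw [neg_one_mul]
        rcases lt_trichotomy (⟪B x, x⟫) 0 with h | h | h
        · linarith
        · exact absurd h (hz0 x hxS hxq)
        · exact (hmix x hxS x₂ hx₂S hxq hx₂q h hg2).elim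
    -- the perturbation argument
    set W : Set E := S ∩ {x : E | σ * ⟪B x, x⟫ ≤ 0} with hWdef
    have hWc : IsCompact W :=
      hScpt.inter_right (isClosed_le (continuous_const.mul hBc) continuous_const)
    have hWne : W.Nonempty := ⟨w₀, hw₀S, le_of_lt hw₀⟩
    obtain ⟨w, hwW, hwmin⟩ := hWc.exists_isMinOn hWne (hqc τ₀).continuousOn
    set c := q τ₀ w with hcdef
    clear_value c
    have hclam : lam < c := by
      obtain ⟨hwS, hwg⟩ := hwW
      rw [hlamdef, hcdef]
      rcases lt_or_eq_of_le (hmle τ₀ w hwS) with h | h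
      · exact h
      · exact absurd (hσmin w hwS (by rw [hlamdef]; exact h.symm)) (not_lt.2 hwg)
    obtain ⟨δ, hδpos, hδG⟩ : ∃ δ : ℝ, 0 < δ ∧ δ * G ≤ (c - lam) / 2 := by
      refine ⟨(c - lam) / (2 * (G + 1)), div_pos (by linarith) (by linarith), ?_⟩
      rw [div_mul_eq_mul_div, div_le_div_iff₀ (by linarith) (by norm_num)]
      nlinarith [hGnn, hclam]
    set τ' := τ₀ + σ * δ with hτ'def
    clear_value τ'
    have hq' : ∀ y : E, q τ' y = q τ₀ y + δ * (σ * ⟪B y, y⟫) := by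
      intro y; simp only [hqdef, hτ'def]; ring
    have hm' : lam < m τ' := by
      have hxS' : xm τ' ∈ S := hxmS τ'
      have hmval : m τ' = q τ₀ (xm τ') + δ * (σ * ⟪B (xm τ'), xm τ'⟫) := by
        rw [hmdef]; exact hq' (xm τ')
      by_cases hgx : σ * ⟪B (xm τ'), xm τ'⟫ ≤ 0
      · have hmem : xm τ' ∈ W := ⟨hxS', hgx⟩
        have h1 : c ≤ q τ₀ (xm τ') := by rw [hcdef]; exact isMinOn_iff.1 hwmin _ hmem
        have h2 : -G ≤ σ * ⟪B (xm τ'), xm τ'⟫ := by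
          have hGx := hG _ hxS'
          rcases hσ1 with rfl | rfl
          · have := neg_abs_le (⟪B (xm τ'), xm τ'⟫); linarith
          · have := le_abs_self (⟪B (xm τ'), xm τ'⟫); linarith
        have h3 : δ * (-G) ≤ δ * (σ * ⟪B (xm τ'), xm τ'⟫) :=
          mul_le_mul_of_nonneg_left h2 (le_of_lt hδpos)
        rw [hmval]
        nlinarith
      · push_neg at hgx
        have h1 : lam ≤ q τ₀ (xm τ') := by rw [hlamdef]; exact hmle τ₀ _ hxS'
        have h2 : 0 < δ * (σ * ⟪B (xm τ'), xm τ'⟫) := mul_pos hδpos hgx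
        rw [hmval]; linarith
    exact absurd (hmax τ') (not_le.2 hm')
  · rintro ⟨τ, hτ⟩ x hx hgx
    have h := hτ x hx
    rw [LinearMap.add_apply, LinearMap.smul_apply, inner_add_left, real_inner_smul_left,
      hgx, mul_zero, add_zero] at h
    exact h
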